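/- For every point x in the period domain 𝒫 = {x ∈ GL(2,ℂ) : Im(x₁·conj(x₃)) > 0}, there exists a unique g ∈ G₀ (the group of invertible upper-triangular complex 2×2 matrices) such that x·g⁻¹ = [[z,-1],[1,0]] for some z ∈ ℍ; namely g = [[x₃, x₄],[0, det(x)/x₃]] and z = x₁/x₃. -/

import Mathlib

open Matrix Complex
local notation "conj" => starRingEnd ℂ

/-- every point x of the period domain is carried to a point of the
embedded upper half plane by a unique element g of the group G₀ of invertible
upper-triangular matrices, namely g = [[x₃,x₄],[0,det(x)/x₃]], z = x₁/x₃. -/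
theorem stmt16 (x : Matrix (Fin 2) (Fin 2) ℂ) (hdet : IsUnit x.det)
    (hx : 0 < (x 0 0 * conj (x 1 0)).im) :
    (∃! g : Matrix (Fin 2) (Fin 2) ℂ,
      (g 1 0 = 0 ∧ g 0 0 ≠ 0 ∧ g 1 1 ≠ 0) ∧
      ∃ z : ℂ, 0 < z.im ∧ x * g⁻¹ = !![z, -1; 1, 0]) ∧
    x * (!![x 1 0, x 1 1; 0, x.det / x 1 0])⁻¹ = !![x 0 0 / x 1 0, -1; 1, 0] := by
  have h10 : x 1 0 ≠ 0 := by
    intro h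
    rw [h] at hx
    simp at hx
  have hdne : x.det ≠ 0 := hdet.ne_zero
  have hdetx : x.det = x 0 0 * x 1 1 - x 0 1 * x 1 0 := Matrix.det_fin_two x
  set g0 : Matrix (Fin 2) (Fin 2) ℂ := !![x 1 0, x 1 1; 0, x.det / x 1 0] with hg0
  have hdetg0 : g0.det = x.det := by
    rw [hg0, Matrix.det_fin_two_of]
    field_simp
    ring
  have hg0unit : IsUnit g0.det := hdetg0 ▸ hdet
  have h1 : (x 0 0 * conj (x 1 0)).im
      = (x 0 0).im * (x 1 0).re - (x 0 0).re * (x 1 0).im := by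
    simp [Complex.mul_im, Complex.conj_re, Complex.conj_im]
    ring
  have hz : 0 < (x 0 0 / x 1 0).im := by
    have h2 : (x 0 0 / x 1 0).im
        = (x 0 0 * conj (x 1 0)).im / Complex.normSq (x 1 0) := by
      rw [h1, Complex.div_im]
      ring
    rw [h2]
    exact div_pos hx (Complex.normSq_pos.mpr h10)
  have hkey : x = !![x 0 0 / x 1 0, -1; 1, 0] * g0 := by
    ext i j
    fin_cases i <;> fin_cases j <;>
      simp [hg0, Matrix.mul_apply, Fin.sum_univ_two] <;>
      field_simp <;> rw [hdetx] <;> ring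
  have hmain : x * g0⁻¹ = !![x 0 0 / x 1 0, -1; 1, 0] := by
    conv_lhs => rw [hkey]
    rw [Matrix.mul_assoc, Matrix.mul_nonsing_inv _ hg0unit, Matrix.mul_one]
  refine ⟨⟨g0, ⟨⟨by simp [hg0], by simpa [hg0] using h10,
      by simp [hg0]; exact ⟨hdne, h10⟩⟩,
      ⟨x 0 0 / x 1 0, hz, hmain⟩⟩, ?_⟩, hmain⟩
  rintro g ⟨⟨hg10, hg00, hg11⟩, z', hz', hgx⟩
  have hdetg : g.det = g 0 0 * g 1 1 := by
    rw [Matrix.det_fin_two, hg10]; ring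
  have hgunit : IsUnit g.det := by
    rw [hdetg]; exact isUnit_iff_ne_zero.mpr (mul_ne_zero hg00 hg11)
  have hx_eq : x = !![z', -1; 1, 0] * g := by
    have := congrArg (· * g) hgx
    simpa [Matrix.mul_assoc, Matrix.nonsing_inv_mul _ hgunit] using this
  have e10 : x 1 0 = g 0 0 := by
    have := congrFun (congrFun hx_eq 1) 0
    simpa [Matrix.mul_apply, Fin.sum_univ_two, hg10] using this
  have e11 : x 1 1 = g 0 1 := by
    have := congrFun (congrFun hx_eq 1) 1
    simpa [Matrix.mul_apply, Fin.sum_univ_two, hg10] using this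
  have e00 : x 0 0 = z' * g 0 0 := by
    have := congrFun (congrFun hx_eq 0) 0
    simpa [Matrix.mul_apply, Fin.sum_univ_two, hg10] using this
  have e01 : x 0 1 = z' * g 0 1 - g 1 1 := by
    have := congrFun (congrFun hx_eq 0) 1
    simpa [Matrix.mul_apply, Fin.sum_univ_two, hg10, sub_eq_add_neg] using this
  ext i j
  fin_cases i <;> fin_cases j <;> simp [hg0]
  · exact e10.symm
  · exact e11.symm
  · exact hg10
  · rw [hdetx, e00, e01, e10, e11]
    field_simp
    ring
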